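/- (Barbalat Lemma extension) Let x : [0,∞) → ℝⁿ be differentiable with ẋ(t) = f(t) + g(t), where f : [0,∞) → ℝⁿ is uniformly continuous. If x(t) converges to a constant k_c as t → ∞ and g(t) → 0 as t → ∞, then ẋ(t) → 0 as t → ∞. -/

import Mathlib

open Matrix Filter

noncomputable section

/-- Skew-symmetric matrix of a vector: `skew ω *ᵥ v = ω ×₃ v`. -/
def skew (ω : Fin 3 → ℝ) : Matrix (Fin 3) (Fin 3) ℝ :=
  !![0, -ω 2, ω 1; ω 2, 0, -ω 0; -ω 1, ω 0, 0]

/-- Inverse of `skew` on skew-symmetric matrices. -/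
def vex (M : Matrix (Fin 3) (Fin 3) ℝ) : Fin 3 → ℝ :=
  ![M 2 1, M 0 2, M 1 0]

/-- Anti-symmetric projection `P_a(M) = (M - Mᵀ)/2`. -/
def Pa (M : Matrix (Fin 3) (Fin 3) ℝ) : Matrix (Fin 3) (Fin 3) ℝ :=
  (1 / 2 : ℝ) • (M - Mᵀ)

/-- `Υ(M) = vex (P_a M)`. -/
def Upsilon (M : Matrix (Fin 3) (Fin 3) ℝ) : Fin 3 → ℝ := vex (Pa M)

/-- `R ∈ SO(3)`. -/
def SO3 (R : Matrix (Fin 3) (Fin 3) ℝ) : Prop :=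
  R * Rᵀ = 1 ∧ Rᵀ * R = 1 ∧ R.det = 1

/-- `‖R‖_I = Tr(I₃ - R)/4`. -/
def normI (R : Matrix (Fin 3) (Fin 3) ℝ) : ℝ := Matrix.trace (1 - R) / 4

/-- Squared Euclidean norm of a vector of `ℝ³`. -/
def sqnorm (v : Fin 3 → ℝ) : ℝ := ∑ i, v i ^ 2

/-- Barbalat Lemma extension. -/
theorem barbalat_extension (n : ℕ) (x f g : ℝ → EuclideanSpace ℝ (Fin n))
    (k_c : EuclideanSpace ℝ (Fin n))
    (hderiv : ∀ t ∈ Set.Ici (0 : ℝ), HasDerivWithinAt x (f t + g t) (Set.Ici 0) t)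
    (hf : UniformContinuousOn f (Set.Ici 0))
    (hx : Tendsto x atTop (nhds k_c))
    (hg : Tendsto g atTop (nhds 0)) :
    Tendsto (fun t => f t + g t) atTop (nhds 0) := by
  have hf0 : Tendsto f atTop (nhds 0) := by
    rw [NormedAddCommGroup.tendsto_nhds_zero]
    by_contra h
    push_neg at h
    obtain ⟨ε, hε, hev⟩ := h
    obtain ⟨δ, hδ, hδf⟩ := (Metric.uniformContinuousOn_iff.mp hf) (ε / 2) (by positivity)
    set L := δ / 2 with hLdef
    have hLpos : 0 < L := by positivity
    rw [Metric.tendsto_atTop] at hx hg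
    obtain ⟨T₁, hT₁⟩ := hx (ε * L / 16) (by positivity)
    obtain ⟨T₂, hT₂⟩ := hg (ε / 8) (by positivity)
    obtain ⟨a, hfa, ha⟩ :=
      (hev.and_eventually (eventually_ge_atTop (max (max T₁ T₂) 0))).exists
    have ha0 : (0 : ℝ) ≤ a := le_trans (le_max_right _ _) ha
    have haT₁ : T₁ ≤ a := le_trans (le_trans (le_max_left _ _) (le_max_left _ _)) ha
    have haT₂ : T₂ ≤ a := le_trans (le_trans (le_max_right _ _) (le_max_left _ _)) ha
    set b := a + L with hbdef
    have hab : a ≤ b := by simp [hbdef]; linarith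
    have hsub : Set.Icc a b ⊆ Set.Ici (0 : ℝ) := fun t ht => le_trans ha0 ht.1
    -- mean value inequality on z t = x t - t • f a
    have hz : ∀ t ∈ Set.Icc a b,
        HasDerivWithinAt (fun t => x t - t • f a) ((f t + g t) - f a) (Set.Icc a b) t := by
      intro t ht
      have h1 : HasDerivWithinAt x (f t + g t) (Set.Icc a b) t :=
        (hderiv t (hsub ht)).mono hsub
      have h2 : HasDerivWithinAt (fun s : ℝ => s • f a) ((1 : ℝ) • f a) (Set.Icc a b) t :=
        ((hasDerivAt_id t).smul_const (f a)).hasDerivWithinAt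
      have h3 := h1.sub h2
      rw [one_smul] at h3
      exact h3
    have hbound : ∀ t ∈ Set.Icc a b, ‖(f t + g t) - f a‖ ≤ ε / 2 + ε / 8 := by
      intro t ht
      have ht0 : t ∈ Set.Ici (0 : ℝ) := hsub ht
      have hdt : dist t a < δ := by
        rw [Real.dist_eq, abs_of_nonneg (by linarith [ht.1])]
        have := ht.2
        simp [hbdef] at this
        linarith
      have hfd : ‖f t - f a‖ < ε / 2 := by
        have := hδf t ht0 a (Set.mem_Ici.mpr ha0) hdt
        rwa [dist_eq_norm] at this
      have hgd : ‖g t‖ < ε / 8 := by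
        have := hT₂ t (le_trans haT₂ ht.1)
        rwa [dist_zero_right] at this
      calc ‖(f t + g t) - f a‖ = ‖(f t - f a) + g t‖ := by rw [add_sub_right_comm]
        _ ≤ ‖f t - f a‖ + ‖g t‖ := norm_add_le _ _
        _ ≤ ε / 2 + ε / 8 := by linarith
    have key := norm_image_sub_le_of_norm_deriv_le_segment' hz
      (fun t ht => hbound t (Set.Ico_subset_Icc_self ht)) b
      (Set.right_mem_Icc.mpr hab)
    have hba : b - a = L := by simp [hbdef]
    rw [hba] at key
    have hrw : (x b - b • f a) - (x a - a • f a) = (x b - x a) - L • f a := by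
      rw [← hba, sub_smul]; abel
    rw [hrw] at key
    have hxd : ‖x b - x a‖ < ε * L / 8 := by
      have h1 := hT₁ b (le_trans haT₁ hab)
      have h2 := hT₁ a haT₁
      calc ‖x b - x a‖ = dist (x b) (x a) := (dist_eq_norm _ _).symm
        _ ≤ dist (x b) k_c + dist (x a) k_c := dist_triangle_right _ _ _
        _ < ε * L / 8 := by linarith
    have hLfa : L * ε ≤ ‖L • f a‖ := by
      rw [norm_smul, Real.norm_of_nonneg hLpos.le]
      exact mul_le_mul_of_nonneg_left hfa hLpos.le
    have htr : ‖L • f a‖ ≤ ‖x b - x a‖ + (ε / 2 + ε / 8) * L := by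
      have : L • f a = (x b - x a) - ((x b - x a) - L • f a) := by abel
      rw [this]
      exact le_trans (norm_sub_le _ _) (by linarith [key])
    nlinarith [hLfa, htr, hxd]
  have := hf0.add hg
  simpa using this
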